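/- Fix Q ∈ 𝒬_phy, let B_Q be the unique real symmetric traceless 3×3 matrix with ∫_{𝕊²} (m mᵀ − I/3) f_{B_Q} dσ = Q, and write f_Q = f_{B_Q}. Then for every probability density f on 𝕊² such that f ln f is σ-integrable and ∫_{𝕊²} (m mᵀ − I/3) f(m) dσ(m) = Q, one has ∫_{𝕊²} f ln f dσ ≥ ∫_{𝕊²} f_Q ln f_Q dσ, with equality if and only if f = f_Q σ-a.e.; that is, the Bingham density f_Q minimizes the entropy ∫ f ln f dσ among all probability densities with prescribed second moment Q. -/

import Mathlib

open MeasureTheory Real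

noncomputable section

abbrev E3 : Type := EuclideanSpace ℝ (Fin 3)
abbrev S2 : Type := Metric.sphere (0 : E3) 1
abbrev Mat3 : Type := Matrix (Fin 3) (Fin 3) ℝ

/-- The standard (rotation-invariant) surface measure on 𝕊², of total mass 4π. -/
noncomputable def sigma3 : Measure S2 := (volume : Measure E3).toSphere

/-- The quadratic form `m · B m` for `m ∈ 𝕊²`. -/
noncomputable def quadForm (B : Mat3) (m : S2) : ℝ :=
  ∑ i, ∑ j, (m : E3) i * B i j * (m : E3) j

/-- The Bingham partition function `Z_B = ∫ exp(m·Bm) dσ(m)`. -/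
noncomputable def ZB (B : Mat3) : ℝ := ∫ m : S2, Real.exp (quadForm B m) ∂sigma3

/-- The Bingham density `f_B(m) = exp(m·Bm)/Z_B`. -/
noncomputable def bingham (B : Mat3) (m : S2) : ℝ := Real.exp (quadForm B m) / ZB B

/-- The traceless second moment `∫ (m mᵀ − I/3) f dσ` of a density `f` on 𝕊². -/
noncomputable def secondMoment (f : S2 → ℝ) : Mat3 :=
  Matrix.of fun i j =>
    ∫ m : S2, ((m : E3) i * (m : E3) j - (if i = j then (1 : ℝ) / 3 else 0)) * f m ∂sigma3

/-- `Q ∈ 𝒬_phy`: symmetric, traceless, with all eigenvalues in `(−1/3, 2/3)`. -/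
def Qphy (Q : Mat3) : Prop :=
  Q.IsSymm ∧ Q.trace = 0 ∧ ∀ μ ∈ spectrum ℝ Q, -(1 / 3 : ℝ) < μ ∧ μ < 2 / 3

/-! ### Auxiliary lemmas -/

instance sigma3_finite : IsFiniteMeasure sigma3 := by unfold sigma3; infer_instance

instance sigma3_nezero : NeZero sigma3 := by
  refine ⟨fun h => ?_⟩
  have h2 := Measure.toSphere_apply_univ (volume : Measure E3)
  rw [show (volume : Measure E3).toSphere = sigma3 from rfl, h] at h2
  have hb : (0 : ENNReal) < volume (Metric.ball (0 : E3) 1) := Metric.measure_ball_pos _ _ one_pos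
  simp only [Measure.coe_zero, Pi.zero_apply] at h2
  rcases mul_eq_zero.mp h2.symm with h3 | h3
  · simp [finrank_euclideanSpace_fin] at h3
  · rw [h3] at hb; exact lt_irrefl _ hb

lemma coord_continuous (i : Fin 3) : Continuous (fun m : S2 => (m : E3) i) :=
  (continuous_apply i).comp ((PiLp.continuous_ofLp 2 _).comp continuous_subtype_val)

lemma coord_abs_le (m : S2) (i : Fin 3) : |(m : E3) i| ≤ 1 := by
  have h1 : ‖(m : E3)‖ = 1 := by simp [mem_sphere_zero_iff_norm.mp m.2]
  have h2 : |(m : E3) i| ≤ ‖(m : E3)‖ := by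
    rw [EuclideanSpace.norm_eq, ← Real.sqrt_sq_eq_abs]
    apply Real.sqrt_le_sqrt
    have := Finset.single_le_sum (f := fun j => ‖(m : E3) j‖ ^ 2)
      (fun j _ => sq_nonneg _) (Finset.mem_univ i)
    simpa [Real.norm_eq_abs, sq_abs] using this
  linarith

lemma quadForm_continuous (B : Mat3) : Continuous (quadForm B) := by
  unfold quadForm
  exact continuous_finset_sum _ fun i _ => continuous_finset_sum _ fun j _ =>
    ((coord_continuous i).mul continuous_const).mul (coord_continuous j)

lemma cont_integrable {φ : S2 → ℝ} (hφ : Continuous φ) : Integrable φ sigma3 :=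
  hφ.integrable_of_hasCompactSupport (HasCompactSupport.of_compactSpace _)

lemma cont_bounded {φ : S2 → ℝ} (hφ : Continuous φ) : ∃ C, ∀ m : S2, ‖φ m‖ ≤ C := by
  obtain ⟨C, hC⟩ := isCompact_univ.exists_bound_of_continuousOn hφ.continuousOn
  exact ⟨C, fun m => hC m (Set.mem_univ m)⟩

lemma ZB_pos (B : Mat3) : 0 < ZB B :=
  integral_exp_pos (cont_integrable ((quadForm_continuous B).rexp))

lemma bingham_pos (B : Mat3) (m : S2) : 0 < bingham B m :=
  div_pos (Real.exp_pos _) (ZB_pos B)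

lemma bingham_continuous (B : Mat3) : Continuous (bingham B) :=
  ((quadForm_continuous B).rexp).div_const _

lemma integral_bingham (B : Mat3) : ∫ m, bingham B m ∂sigma3 = 1 := by
  unfold bingham
  rw [integral_div]
  exact div_self (ZB_pos B).ne'

lemma log_bingham (B : Mat3) (m : S2) :
    Real.log (bingham B m) = quadForm B m - Real.log (ZB B) := by
  unfold bingham
  rw [Real.log_div (Real.exp_ne_zero _) (ZB_pos B).ne', Real.log_exp]

lemma log_bingham_continuous (B : Mat3) : Continuous (fun m => Real.log (bingham B m)) := by
  have : (fun m => Real.log (bingham B m)) = fun m => quadForm B m - Real.log (ZB B) := by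
    funext m; exact log_bingham B m
  rw [this]
  exact (quadForm_continuous B).sub continuous_const

lemma mul_log_integrable {h : S2 → ℝ} (hint : Integrable h sigma3) (B : Mat3) :
    Integrable (fun m => h m * Real.log (bingham B m)) sigma3 := by
  have := hint.bdd_mul (log_bingham_continuous B).aestronglyMeasurable
    (ae_of_all _ (cont_bounded (log_bingham_continuous B)).choose_spec)
  simpa [mul_comm] using this

lemma coord_mul_integrable {h : S2 → ℝ} (hint : Integrable h sigma3) (i j : Fin 3) :
    Integrable (fun m : S2 => (m : E3) i * (m : E3) j * h m) sigma3 := by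
  refine hint.bdd_mul ((coord_continuous i).mul (coord_continuous j)).aestronglyMeasurable
    (c := 1) (ae_of_all _ fun m => ?_)
  rw [Real.norm_eq_abs, abs_mul]
  calc |(m : E3) i| * |(m : E3) j| ≤ 1 * 1 :=
        mul_le_mul (coord_abs_le m i) (coord_abs_le m j) (abs_nonneg _) zero_le_one
    _ = 1 := by norm_num

lemma moment_int (B : Mat3) {h : S2 → ℝ} (hint : Integrable h sigma3) :
    ∫ m, quadForm B m * h m ∂sigma3 =
      ∑ i, ∑ j, B i j *
        (secondMoment h i j + (if i = j then (1 : ℝ) / 3 else 0) * ∫ m, h m ∂sigma3) := by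
  have hterm : ∀ i j : Fin 3, ∫ m : S2, (m : E3) i * (m : E3) j * h m ∂sigma3 =
      secondMoment h i j + (if i = j then (1 : ℝ) / 3 else 0) * ∫ m, h m ∂sigma3 := by
    intro i j
    have heq : secondMoment h i j =
        ∫ m : S2, ((m : E3) i * (m : E3) j * h m
          - (if i = j then (1 : ℝ) / 3 else 0) * h m) ∂sigma3 := by
      unfold secondMoment
      simp only [Matrix.of_apply]
      congr 1
      funext m
      ring
    rw [heq, integral_sub (coord_mul_integrable hint i j) (hint.const_mul _),
      integral_const_mul]
    ring
  have hfun : (fun m => quadForm B m * h m) =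
      fun m : S2 => ∑ i, ∑ j, B i j * ((m : E3) i * (m : E3) j * h m) := by
    funext m
    unfold quadForm
    rw [Finset.sum_mul]
    refine Finset.sum_congr rfl fun i _ => ?_
    rw [Finset.sum_mul]
    exact Finset.sum_congr rfl fun j _ => by ring
  rw [hfun]; refine (integral_finset_sum _ (fun i _ =>
    integrable_finset_sum _ fun j _ => (coord_mul_integrable hint i j).const_mul _)).trans ?_
  refine Finset.sum_congr rfl fun i _ => ?_
  refine (integral_finset_sum _ (fun j _ => (coord_mul_integrable hint i j).const_mul _)).trans ?_
  exact Finset.sum_congr rfl fun j _ => by rw [integral_const_mul, hterm i j]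

lemma int_mul_log_bingham (B : Mat3) {h : S2 → ℝ} (hint : Integrable h sigma3) :
    ∫ m, h m * Real.log (bingham B m) ∂sigma3 =
      (∑ i, ∑ j, B i j *
        (secondMoment h i j + (if i = j then (1 : ℝ) / 3 else 0) * ∫ m, h m ∂sigma3))
      - Real.log (ZB B) * ∫ m, h m ∂sigma3 := by
  have hfun : (fun m => h m * Real.log (bingham B m)) =
      fun m => quadForm B m * h m - Real.log (ZB B) * h m := by
    funext m
    rw [log_bingham]
    ring
  have hqint : Integrable (fun m => quadForm B m * h m) sigma3 := by
    have := hint.bdd_mul (quadForm_continuous B).aestronglyMeasurable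
      (ae_of_all _ (cont_bounded (quadForm_continuous B)).choose_spec)
    simpa using this
  rw [hfun, integral_sub hqint (hint.const_mul _), integral_const_mul, moment_int B hint]

lemma gibbs {a b : ℝ} (ha : 0 ≤ a) (hb : 0 < b) :
    0 ≤ a * Real.log a - a * Real.log b - a + b ∧
      (a * Real.log a - a * Real.log b - a + b = 0 ↔ a = b) := by
  rcases ha.eq_or_lt with h0 | hpos
  · rw [← h0]
    simp only [zero_mul, sub_zero, sub_self, zero_add]
    exact ⟨hb.le, by constructor <;> intro h <;> linarith⟩
  · have hba : 0 < b / a := div_pos hb hpos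
    have hlog : Real.log (b / a) ≤ b / a - 1 := Real.log_le_sub_one_of_pos hba
    have hdiv : Real.log (b / a) = Real.log b - Real.log a := Real.log_div hb.ne' hpos.ne'
    have hmul : a * (b / a) = b := by field_simp
    have h2 : a * Real.log (b / a) ≤ a * (b / a - 1) :=
      mul_le_mul_of_nonneg_left hlog hpos.le
    rw [hdiv, mul_sub, mul_sub, mul_one] at h2
    constructor
    · linarith
    · constructor
      · intro heq
        by_contra hne
        have hne1 : b / a ≠ 1 := fun h1 => hne ((div_eq_one_iff_eq hpos.ne').mp h1).symm
        have h3 := Real.log_lt_sub_one_of_pos hba hne1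
        have h4 : a * Real.log (b / a) < a * (b / a - 1) :=
          mul_lt_mul_of_pos_left h3 hpos
        rw [hdiv, mul_sub, mul_sub, mul_one] at h4
        linarith
      · intro h; rw [h]; ring

/-- `Q ∈ 𝒬_phy`... (statement as given). -/
theorem stmt19 (Q : Mat3) (hQ : Qphy Q)
    (BQ : Mat3) (hB1 : BQ.IsSymm) (hB2 : BQ.trace = 0)
    (hBQ : secondMoment (bingham BQ) = Q)
    (f : S2 → ℝ) (hf : Measurable f)
    (hpos : ∀ᵐ m ∂sigma3, 0 ≤ f m) (hprob : ∫ m, f m ∂sigma3 = 1)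
    (hent : Integrable (fun m => f m * Real.log (f m)) sigma3)
    (hmom : secondMoment f = Q) :
    (∫ m, bingham BQ m * Real.log (bingham BQ m) ∂sigma3) ≤
        ∫ m, f m * Real.log (f m) ∂sigma3 ∧
    ((∫ m, f m * Real.log (f m) ∂sigma3) =
        (∫ m, bingham BQ m * Real.log (bingham BQ m) ∂sigma3) ↔
      f =ᵐ[sigma3] bingham BQ) := by
  set g := bingham BQ with hg
  -- basic integrability facts
  have hfint : Integrable f sigma3 := by
    by_contra hns
    rw [integral_undef hns] at hprob
    norm_num at hprob
  have hgint : Integrable g sigma3 := cont_integrable (bingham_continuous BQ)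
  have hgpos : ∀ m, 0 < g m := bingham_pos BQ
  have hg1 : ∫ m, g m ∂sigma3 = 1 := integral_bingham BQ
  have hfg_int : Integrable (fun m => f m * Real.log (g m)) sigma3 :=
    mul_log_integrable hfint BQ
  -- ∫ f log g = ∫ g log g
  have key : ∫ m, f m * Real.log (g m) ∂sigma3 = ∫ m, g m * Real.log (g m) ∂sigma3 := by
    rw [int_mul_log_bingham BQ hfint, int_mul_log_bingham BQ hgint, hprob, hg1, hmom, hBQ]
  -- the Gibbs integrand
  set h : S2 → ℝ := fun m => f m * Real.log (f m) - f m * Real.log (g m) - f m + g m with hh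
  have hHint : Integrable h sigma3 := ((hent.sub hfg_int).sub hfint).add hgint
  have hHnn : 0 ≤ᵐ[sigma3] h := by
    filter_upwards [hpos] with m hm
    exact (gibbs hm (hgpos m)).1
  have hHval : ∫ m, h m ∂sigma3 =
      (∫ m, f m * Real.log (f m) ∂sigma3) - ∫ m, g m * Real.log (g m) ∂sigma3 := by
    have e1 : ∫ m, h m ∂sigma3 =
        (∫ m, (f m * Real.log (f m) - f m * Real.log (g m) - f m) ∂sigma3)
          + ∫ m, g m ∂sigma3 := integral_add ((hent.sub hfg_int).sub hfint) hgint
    have e2 : ∫ m, (f m * Real.log (f m) - f m * Real.log (g m) - f m) ∂sigma3 =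
        (∫ m, (f m * Real.log (f m) - f m * Real.log (g m)) ∂sigma3)
          - ∫ m, f m ∂sigma3 := integral_sub (hent.sub hfg_int) hfint
    have e3 : ∫ m, (f m * Real.log (f m) - f m * Real.log (g m)) ∂sigma3 =
        (∫ m, f m * Real.log (f m) ∂sigma3)
          - ∫ m, f m * Real.log (g m) ∂sigma3 := integral_sub hent hfg_int
    rw [e1, e2, e3, hprob, hg1, key]
    ring
  have hIneq : 0 ≤ ∫ m, h m ∂sigma3 := integral_nonneg_of_ae hHnn
  constructor
  · linarith [hHval, hIneq]
  · constructor
    · intro heq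
      have h0 : ∫ m, h m ∂sigma3 = 0 := by rw [hHval, heq]; ring
      have hae : h =ᵐ[sigma3] 0 := (integral_eq_zero_iff_of_nonneg_ae hHnn hHint).mp h0
      filter_upwards [hae, hpos] with m h1 h2
      exact (gibbs h2 (hgpos m)).2.mp h1
    · intro heq
      refine integral_congr_ae ?_
      filter_upwards [heq] with m hm
      rw [hm]
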